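/- Let T > 0, x_0 > 0, γ > 0, and let r : [0,T] → ℝ be continuous. Suppose X : [0,T) → ℝ satisfies X(0) = x_0 and X′(t) = X(t)r(t) − c(t) on (0,T), where c(t) = X(t)/B_{f₁}(t), f₁(t) = (β(t) − (1−γ)r(t))/γ, and the time preference function equals the interest rate, β(t) = r(t) for all t ∈ [0,T] (so f₁ = r). Then the consumption rate is constant: c(t) = x_0/B_r(0) for all t ∈ [0,T). -/

import Mathlib

open Set intervalIntegral

/-- The annuity value `B_f(t) = ∫_t^T exp(−∫_t^u f(s) ds) du`. -/
noncomputable def Bann (T : ℝ) (f : ℝ → ℝ) (t : ℝ) : ℝ :=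
  ∫ u in t..T, Real.exp (-∫ s in t..u, f s)

/-- The rate `f₁(t) = (β(t) − (1−γ)r(t))/γ` determining the optimal
wealth-to-consumption factor of a CRRA utility maximizer. -/
noncomputable def fOne (γ : ℝ) (r β : ℝ → ℝ) : ℝ → ℝ :=
  fun t => (β t - (1 - γ) * r t) / γ

set_option maxHeartbeats 1600000 in
/-- If the time preference function equals the interest rate, `β = r` (so `f₁ = r`),
then the optimal CRRA consumption rate `c(t) = X(t)/B_{f₁}(t)` is constant, equal to
the martingale consumption level `x₀/B_r(0)`. -/
theorem crra_consumption_constant_when_beta_eq_r (T : ℝ) (hT : 0 < T)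
    (x₀ : ℝ) (hx₀ : 0 < x₀) (γ : ℝ) (hγ : 0 < γ)
    (r β : ℝ → ℝ) (hr : ContinuousOn r (Icc 0 T))
    (hβr : ∀ t ∈ Icc (0 : ℝ) T, β t = r t)
    (X c : ℝ → ℝ)
    (hX_cont : ContinuousOn X (Ico 0 T)) (hX0 : X 0 = x₀)
    (hc_def : ∀ t ∈ Ico (0 : ℝ) T, c t = X t / Bann T (fOne γ r β) t)
    (hX_ode : ∀ t ∈ Ioo (0 : ℝ) T, HasDerivAt X (X t * r t - c t) t) :
    ∀ t ∈ Ico (0 : ℝ) T, c t = x₀ / Bann T r 0 := by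
  -- continuous extension of r to all of ℝ
  set rt : ℝ → ℝ := fun t => r (max 0 (min t T)) with hrt_def
  have hmem : ∀ t : ℝ, max 0 (min t T) ∈ Icc (0 : ℝ) T := by
    intro t
    exact ⟨le_max_left _ _, max_le hT.le (min_le_right _ _)⟩
  have hrt_cont : Continuous rt := by
    apply hr.comp_continuous _ hmem
    exact continuous_const.max (continuous_id.min continuous_const)
  have hrt_eq : ∀ t ∈ Icc (0 : ℝ) T, rt t = r t := by
    intro t ht
    simp only [hrt_def]
    rw [min_eq_left ht.2, max_eq_right ht.1]
  -- antiderivative of rt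
  set R : ℝ → ℝ := fun t => ∫ s in (0:ℝ)..t, rt s with hR_def
  have hR : ∀ t : ℝ, HasDerivAt R (rt t) t := fun t =>
    integral_hasDerivAt_right (hrt_cont.intervalIntegrable _ _)
      (hrt_cont.stronglyMeasurableAtFilter _ _) hrt_cont.continuousAt
  have hR_cont : Continuous R := continuous_iff_continuousAt.2 fun t => (hR t).continuousAt
  have hE_cont : Continuous fun u => Real.exp (-R u) := (hR_cont.neg).rexp
  set G : ℝ → ℝ := fun t => ∫ u in t..T, Real.exp (-R u) with hG_def
  have hG : ∀ t : ℝ, HasDerivAt G (-(Real.exp (-R t))) t := fun t =>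
    integral_hasDerivAt_left (hE_cont.intervalIntegrable _ _)
      (hE_cont.stronglyMeasurableAtFilter _ _) hE_cont.continuousAt
  set Bt : ℝ → ℝ := fun t => Real.exp (R t) * G t with hBt_def
  have hBt : ∀ t : ℝ, HasDerivAt Bt (rt t * Bt t - 1) t := by
    intro t
    have h : HasDerivAt Bt _ t := ((hR t).exp).mul (hG t)
    convert h using 1
    rw [Real.exp_neg]
    have := Real.exp_pos (R t)
    field_simp
    ring
  have hBt_cont : Continuous Bt := continuous_iff_continuousAt.2 fun t => (hBt t).continuousAt
  -- Bann T rt = Bt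
  have hBann_rt : ∀ t : ℝ, Bann T rt t = Bt t := by
    intro t
    have hinner : ∀ u : ℝ, Real.exp (-∫ s in t..u, rt s)
        = Real.exp (R t) * Real.exp (-R u) := by
      intro u
      have h : R u - R t = ∫ s in t..u, rt s :=
        integral_interval_sub_left (hrt_cont.intervalIntegrable _ _)
          (hrt_cont.intervalIntegrable _ _)
      rw [← h, neg_sub, Real.exp_sub]
      rw [Real.exp_neg]
      field_simp
    simp only [Bann, hinner]
    rw [intervalIntegral.integral_const_mul]
  -- positivity of Bt on [0, T)
  have hBt_pos : ∀ t : ℝ, t < T → 0 < Bt t := by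
    intro t ht
    apply mul_pos (Real.exp_pos _)
    exact intervalIntegral_pos_of_pos (hE_cont.intervalIntegrable _ _)
      (fun x => Real.exp_pos _) ht
  -- Bann with fOne equals Bt on [0, T]
  have hBann_f : ∀ t ∈ Icc (0 : ℝ) T, Bann T (fOne γ r β) t = Bt t := by
    intro t ht
    rw [← hBann_rt]
    simp only [Bann]
    apply intervalIntegral.integral_congr
    intro u hu
    have huT : u ∈ Icc (0 : ℝ) T := uIcc_subset_Icc ht (right_mem_Icc.2 hT.le) hu
    have hin : EqOn (fOne γ r β) rt (uIcc t u) := by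
      intro s hs
      have hsT : s ∈ Icc (0 : ℝ) T := uIcc_subset_Icc ht huT hs
      simp only [fOne]
      rw [hβr s hsT, hrt_eq s hsT]
      field_simp
      ring
    exact congrArg Real.exp (congrArg Neg.neg (intervalIntegral.integral_congr hin))
  have hBann_r0 : Bann T r 0 = Bt 0 := by
    rw [← hBann_rt]
    simp only [Bann]
    apply intervalIntegral.integral_congr
    intro u hu
    have huT : u ∈ Icc (0 : ℝ) T := by
      rwa [uIcc_of_le hT.le] at hu
    have hin : EqOn r rt (uIcc 0 u) := by
      intro s hs
      have hsT : s ∈ Icc (0 : ℝ) T :=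
        uIcc_subset_Icc (left_mem_Icc.2 hT.le) huT hs
      exact (hrt_eq s hsT).symm
    exact congrArg Real.exp (congrArg Neg.neg (intervalIntegral.integral_congr hin))
  -- the ratio Y = X / Bt has zero derivative on (0, T)
  set Y : ℝ → ℝ := fun t => X t / Bt t with hY_def
  have hc_bt : ∀ t ∈ Ico (0 : ℝ) T, c t = X t / Bt t := by
    intro t ht
    rw [hc_def t ht, hBann_f t ⟨ht.1, ht.2.le⟩]
  have hY_deriv : ∀ t ∈ Ioo (0 : ℝ) T, HasDerivAt Y 0 t := by
    intro t ht
    have hBne : Bt t ≠ 0 := (hBt_pos t ht.2).ne'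
    have hd := (hX_ode t ht).div (hBt t) hBne
    have hzero : ((X t * r t - c t) * Bt t - X t * (rt t * Bt t - 1)) / (Bt t) ^ 2 = 0 := by
      rw [hc_bt t ⟨ht.1.le, ht.2⟩, hrt_eq t ⟨ht.1.le, ht.2.le⟩]
      field_simp
      ring
    rw [← hzero]
    exact hd
  have hY_cont : ContinuousOn Y (Ico 0 T) := by
    apply hX_cont.div (hBt_cont.continuousOn)
    intro t ht
    exact (hBt_pos t ht.2).ne'
  -- conclude
  intro t ht
  have hY0 : Y 0 = x₀ / Bt 0 := by
    simp only [hY_def, hX0]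
  have hYt : Y t = Y 0 := by
    rcases eq_or_lt_of_le ht.1 with h0 | h0
    · rw [← h0]
    · obtain ⟨d, hd, hslope⟩ := exists_hasDerivAt_eq_slope Y (fun _ => 0) h0
        (hY_cont.mono fun x hx => ⟨hx.1, lt_of_le_of_lt hx.2 ht.2⟩)
        (fun x hx => hY_deriv x ⟨hx.1, lt_trans hx.2 ht.2⟩)
      have ht0 : t - 0 ≠ 0 := by linarith
      have h2 := (div_eq_zero_iff.1 hslope.symm).resolve_right ht0
      linarith
  rw [hc_bt t ht, hBann_r0]
  have : Y t = x₀ / Bt 0 := hYt.trans hY0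
  simpa [hY_def] using this
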